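/- Let d ≥ 0 and q ≥ 2 be integers and γ > 1 a real with q ≥ d + γ. Let p_1, …, p_d ∈ [0, 1/γ]^q be subdistributions (entries at most 1/γ, entries summing to at most 1). Then for every color c ∈ [q], g_c(p_1, …, p_d) / (1 − g_c(p_1, …, p_d)) ≤ (1/(q−1)) · (1 + 1/(γ−1))^{γd/(q−1)}, where g is the coloring tree recursion. -/

import Mathlib

open Finset

/-- The coloring tree recursion:
`g_c(p_1, …, p_d) = Π_i (1 − p_i(c)) / Σ_b Π_i (1 − p_i(b))`. -/
noncomputable def colorRec {q d : ℕ} (p : Fin d → Fin q → ℝ) (c : Fin q) : ℝ :=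
  (∏ i, (1 - p i c)) / (∑ b, ∏ i, (1 - p i b))

/-- Two-level marginal bound: if `q ≥ d + γ` with `γ > 1` and the inputs are subdistributions
with entries at most `1/γ`, then
`g_c/(1 − g_c) ≤ (1/(q−1))·(1 + 1/(γ−1))^(γd/(q−1))`. -/
theorem colorRec_two_level_marginal_bound (d q : ℕ) (hq : 2 ≤ q)
    (γ : ℝ) (hγ : 1 < γ) (hdq : (d : ℝ) + γ ≤ (q : ℝ))
    (p : Fin d → Fin q → ℝ)
    (h0 : ∀ i c, 0 ≤ p i c) (hB : ∀ i c, p i c ≤ 1 / γ)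
    (hsub : ∀ i, ∑ c, p i c ≤ 1) :
    ∀ c, colorRec p c / (1 - colorRec p c) ≤
      (1 / ((q : ℝ) - 1)) * (1 + 1 / (γ - 1)) ^ ((γ * d) / ((q : ℝ) - 1)) := by
  intro c
  have hγ0 : (0 : ℝ) < γ := lt_trans one_pos hγ
  set c0 : ℝ := 1 - 1 / γ with hc0def
  have hc0pos : 0 < c0 := by
    have : 1 / γ < 1 := by rw [div_lt_one hγ0]; exact hγ
    simpa [hc0def] using sub_pos.mpr this
  have hc0le1 : c0 ≤ 1 := by
    have : 0 ≤ 1 / γ := by positivity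
    simp [hc0def]; linarith
  have hq1 : (1 : ℝ) < (q : ℝ) := by exact_mod_cast lt_of_lt_of_le one_lt_two hq
  have hq1' : (0 : ℝ) < (q : ℝ) - 1 := by linarith
  set P : Fin q → ℝ := fun b => ∏ i, (1 - p i b) with hPdef
  have hfacpos : ∀ (i : Fin d) (b : Fin q), 0 < 1 - p i b := by
    intro i b
    have h1 : p i b ≤ 1 / γ := hB i b
    have h2 : 1 / γ < 1 := by rw [div_lt_one hγ0]; exact hγ
    linarith
  have hPpos : ∀ b, 0 < P b := fun b => Finset.prod_pos fun i _ => hfacpos i b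
  have hPle1 : ∀ b, P b ≤ 1 := by
    intro b
    apply Finset.prod_le_one (fun i _ => (hfacpos i b).le)
    intro i _
    have := h0 i b; linarith
  -- pointwise key inequality: c0 ^ (γ * x) ≤ 1 - x for 0 ≤ x ≤ 1/γ
  have key : ∀ (i : Fin d) (b : Fin q), c0 ^ (γ * p i b) ≤ 1 - p i b := by
    intro i b
    have hs : (-1 : ℝ) ≤ -(1 / γ) := by
      have : 1 / γ < 1 := by rw [div_lt_one hγ0]; exact hγ
      linarith
    have hp1 : 0 ≤ γ * p i b := mul_nonneg hγ0.le (h0 i b)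
    have hp2 : γ * p i b ≤ 1 := by
      have := hB i b
      calc γ * p i b ≤ γ * (1 / γ) := by
            exact mul_le_mul_of_nonneg_left this hγ0.le
        _ = 1 := by field_simp
    have := rpow_one_add_le_one_add_mul_self hs hp1 hp2
    have heq : (1 : ℝ) + -(1 / γ) = c0 := by simp [hc0def]; ring
    rw [heq] at this
    calc c0 ^ (γ * p i b) ≤ 1 + γ * p i b * -(1 / γ) := this
      _ = 1 - p i b := by field_simp; ring
  -- per-row bound over b ≠ c
  have hrow : ∀ i : Fin d, c0 ^ γ ≤ ∏ b ∈ univ.erase c, (1 - p i b) := by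
    intro i
    have hsum : ∑ b ∈ univ.erase c, p i b ≤ 1 := by
      have h1 : ∑ b ∈ univ.erase c, p i b ≤ ∑ b, p i b :=
        Finset.sum_le_sum_of_subset_of_nonneg (Finset.erase_subset _ _)
          (fun b _ _ => h0 i b)
      exact h1.trans (hsub i)
    calc c0 ^ γ ≤ c0 ^ (γ * ∑ b ∈ univ.erase c, p i b) := by
          apply Real.rpow_le_rpow_of_exponent_ge hc0pos hc0le1
          calc γ * ∑ b ∈ univ.erase c, p i b ≤ γ * 1 :=
                mul_le_mul_of_nonneg_left hsum hγ0.le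
            _ = γ := mul_one γ
      _ = ∏ b ∈ univ.erase c, c0 ^ (γ * p i b) := by
          rw [Finset.mul_sum, Real.rpow_sum_of_pos hc0pos]
      _ ≤ ∏ b ∈ univ.erase c, (1 - p i b) :=
          Finset.prod_le_prod (fun b _ => (Real.rpow_nonneg hc0pos.le _))
            (fun b _ => key i b)
  -- product over b ≠ c of P b
  have hprodP : c0 ^ (γ * d) ≤ ∏ b ∈ univ.erase c, P b := by
    have hswap : ∏ b ∈ univ.erase c, P b
        = ∏ i : Fin d, ∏ b ∈ univ.erase c, (1 - p i b) := by
      rw [Finset.prod_comm]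
    rw [hswap]
    calc c0 ^ (γ * d) = ∏ _i : Fin d, c0 ^ γ := by
          rw [Finset.prod_const, card_univ, Fintype.card_fin,
            ← Real.rpow_natCast (c0 ^ γ) d, ← Real.rpow_mul hc0pos.le]
      _ ≤ _ := Finset.prod_le_prod (fun i _ => Real.rpow_nonneg hc0pos.le _)
            (fun i _ => hrow i)
  -- AM-GM on the erased set
  have hcard : (univ.erase c).card = q - 1 := by
    rw [Finset.card_erase_of_mem (mem_univ c), card_univ, Fintype.card_fin]
  have hcardR : ((univ.erase c).card : ℝ) = (q : ℝ) - 1 := by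
    rw [hcard]; push_cast [Nat.cast_sub (le_trans one_le_two hq)]; ring
  set e : ℝ := (γ * d) / ((q : ℝ) - 1) with hedef
  have hT : ((q : ℝ) - 1) * c0 ^ e ≤ ∑ b ∈ univ.erase c, P b := by
    have hw : ∀ b ∈ univ.erase c, (0 : ℝ) ≤ 1 / ((q : ℝ) - 1) := by
      intro b _; positivity
    have hw' : ∑ _b ∈ univ.erase c, (1 : ℝ) / ((q : ℝ) - 1) = 1 := by
      rw [Finset.sum_const, nsmul_eq_mul, hcardR]
      field_simp
    have hz : ∀ b ∈ univ.erase c, (0 : ℝ) ≤ P b := fun b _ => (hPpos b).le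
    have hgm := Real.geom_mean_le_arith_mean_weighted (univ.erase c)
      (fun _ => 1 / ((q : ℝ) - 1)) P hw hw' hz
    -- LHS of hgm: ∏ (P b)^(1/(q-1)) = (∏ P b)^(1/(q-1)) ≥ c0^e
    have hlhs : c0 ^ e ≤ ∏ b ∈ univ.erase c, P b ^ ((1 : ℝ) / ((q : ℝ) - 1)) := by
      rw [Real.finset_prod_rpow _ _ hz]
      have h1 : c0 ^ e = (c0 ^ (γ * d)) ^ ((1 : ℝ) / ((q : ℝ) - 1)) := by
        rw [← Real.rpow_mul hc0pos.le, hedef]; ring_nf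
      rw [h1]
      exact Real.rpow_le_rpow (Real.rpow_nonneg hc0pos.le _) hprodP (by positivity)
    have h2 : c0 ^ e ≤ ∑ b ∈ univ.erase c, 1 / ((q : ℝ) - 1) * P b :=
      le_trans hlhs hgm
    have h3 : ∑ b ∈ univ.erase c, 1 / ((q : ℝ) - 1) * P b
        = (1 / ((q : ℝ) - 1)) * ∑ b ∈ univ.erase c, P b := by
      rw [Finset.mul_sum]
    rw [h3] at h2
    calc ((q : ℝ) - 1) * c0 ^ e
        ≤ ((q : ℝ) - 1) * ((1 / ((q : ℝ) - 1)) * ∑ b ∈ univ.erase c, P b) :=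
          mul_le_mul_of_nonneg_left h2 hq1'.le
      _ = ∑ b ∈ univ.erase c, P b := by field_simp
  set T : ℝ := ∑ b ∈ univ.erase c, P b with hTdef
  have hTpos : 0 < T := lt_of_lt_of_le (by positivity) hT
  set S : ℝ := ∑ b, P b with hSdef
  have hS : S = P c + T := by
    rw [hSdef, hTdef, ← Finset.add_sum_erase _ P (mem_univ c)]
  have hSpos : 0 < S := by rw [hS]; exact add_pos (hPpos c) hTpos
  -- rewrite the ratio
  have hg : colorRec p c = P c / S := rfl
  have hratio : colorRec p c / (1 - colorRec p c) = P c / T := by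
    rw [hg]
    have h1 : 1 - P c / S = T / S := by
      have h2 : P c / S + T / S = 1 := by
        rw [← add_div, ← hS, div_self hSpos.ne']
      linarith
    rw [h1, div_div_div_cancel_right₀ hSpos.ne']
  rw [hratio]
  -- final bound
  have hrhs : (1 : ℝ) + 1 / (γ - 1) = c0⁻¹ := by
    rw [hc0def]
    have h1 : γ - 1 ≠ 0 := by linarith
    field_simp
    ring
  rw [hrhs, Real.inv_rpow hc0pos.le]
  have hA : (0 : ℝ) < ((q : ℝ) - 1) * c0 ^ e := by positivity
  calc P c / T ≤ 1 / T := div_le_div₀ zero_le_one (hPle1 c) hTpos le_rfl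
    _ ≤ 1 / (((q : ℝ) - 1) * c0 ^ e) := one_div_le_one_div_of_le hA hT
    _ = 1 / ((q : ℝ) - 1) * (c0 ^ e)⁻¹ := by rw [one_div, mul_inv, one_div]
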